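/- Let 0 < α < 1 and 0 < ν < α, and define h(t) = max{|t|^ν - 1, 0}. Then there is a constant c depending only on α and ν such that for all t ∈ ℝ with t ≤ 0, the rescaled Caputo derivative from -∞, given by α ∫_{-∞}^{t} (h(t) - h(s))/(t-s)^{1+α} ds, is bounded below by -c. Equivalently, ∫_{-∞}^{t} ν |s|^{ν-1} (t-s)^{-α} ds ≤ c for all t ≤ 0, where the integrand is supported on s ≤ -1 (since h' = 0 on (-1,1) and we consider t ≤ 0). -/

import Mathlib

open Real MeasureTheory Set NNReal

private lemma rpow_subadd_aux {p : ℝ} (hp : 0 ≤ p) (hp1 : p ≤ 1) {a b : ℝ} (ha : 0 ≤ a)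
    (hb : 0 ≤ b) : (a + b) ^ p ≤ a ^ p + b ^ p := by
  have key := NNReal.rpow_add_le_add_rpow a.toNNReal b.toNNReal hp hp1
  have h1 : ((a.toNNReal + b.toNNReal : ℝ≥0) : ℝ) = a + b := by
    push_cast [Real.coe_toNNReal a ha, Real.coe_toNNReal b hb]; ring
  have h2 : (((a.toNNReal + b.toNNReal) ^ p : ℝ≥0) : ℝ) ≤
      ((a.toNNReal ^ p + b.toNNReal ^ p : ℝ≥0) : ℝ) := by exact_mod_cast key
  rw [NNReal.coe_add, NNReal.coe_rpow, NNReal.coe_rpow, NNReal.coe_rpow, h1,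
    Real.coe_toNNReal a ha, Real.coe_toNNReal b hb] at h2
  exact h2

private lemma rpow_sub_le_mul_aux {p : ℝ} (hp0 : 0 < p) (hp1 : p ≤ 1) {x y : ℝ} (hy : 1 ≤ y)
    (hxy : y ≤ x) : x ^ p - y ^ p ≤ p * (x - y) := by
  have hy0 : (0:ℝ) < y := lt_of_lt_of_le one_pos hy
  have hz : 0 ≤ (x - y) / y := div_nonneg (by linarith) hy0.le
  have h1 : x = y * (1 + (x - y) / y) := by field_simp; ring
  have hyp : y ^ p ≤ y := by
    calc y ^ p ≤ y ^ (1:ℝ) := Real.rpow_le_rpow_of_exponent_le hy hp1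
    _ = y := Real.rpow_one y
  have hb := rpow_one_add_le_one_add_mul_self (by linarith : (-1:ℝ) ≤ (x - y) / y)
    hp0.le hp1
  have hmain : x ^ p ≤ y ^ p + p * (y ^ p / y) * (x - y) := by
    calc x ^ p = (y * (1 + (x - y) / y)) ^ p := by rw [← h1]
    _ = y ^ p * (1 + (x - y) / y) ^ p := Real.mul_rpow hy0.le (by linarith)
    _ ≤ y ^ p * (1 + p * ((x - y) / y)) :=
        mul_le_mul_of_nonneg_left hb (Real.rpow_nonneg hy0.le p)
    _ = y ^ p + p * (y ^ p / y) * (x - y) := by field_simp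
  have hdiv : y ^ p / y ≤ 1 := (div_le_one hy0).2 hyp
  have hdiv0 : 0 ≤ y ^ p / y := div_nonneg (Real.rpow_nonneg hy0.le p) hy0.le
  nlinarith [mul_le_mul_of_nonneg_left hdiv (mul_nonneg hp0.le (by linarith : (0:ℝ) ≤ x - y))]

theorem stmt_4 (α ν : ℝ) (hα : α ∈ Set.Ioo (0:ℝ) 1) (hν : 0 < ν) (hνα : ν < α)
    (h : ℝ → ℝ) (hh : ∀ t, h t = max (|t| ^ ν - 1) 0) :
    ∃ c : ℝ, 0 < c ∧ ∀ t ≤ (0:ℝ),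
      -c ≤ α * ∫ s in Set.Iio t, (h t - h s) * (t - s) ^ (-(1+α)) := by
  obtain ⟨hα0, hα1⟩ := hα
  have hν1 : ν ≤ 1 := (hνα.trans hα1).le
  have h1α : 0 < 1 - α := by linarith
  have hαν : 0 < α - ν := by linarith
  -- Lipschitz-type bound
  have key1 : ∀ {s t : ℝ}, s < t → t ≤ 0 → h s - h t ≤ ν * (t - s) := by
    intro s t hst ht0
    by_cases hs1 : -1 ≤ s
    · have hs : |s| ≤ 1 := abs_le.2 ⟨by linarith, by linarith⟩
      have ht : |t| ≤ 1 := abs_le.2 ⟨by linarith, by linarith⟩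
      have h1 : h s = 0 := by
        rw [hh]; exact max_eq_right (by linarith [Real.rpow_le_one (abs_nonneg s) hs hν.le])
      have h2 : h t = 0 := by
        rw [hh]; exact max_eq_right (by linarith [Real.rpow_le_one (abs_nonneg t) ht hν.le])
      rw [h1, h2]; nlinarith
    · push_neg at hs1
      set x := -s with hx
      set y := max (-t) 1 with hy
      have hx1 : 1 < x := by simp only [hx]; linarith
      have hy1 : 1 ≤ y := le_max_right _ _
      have hyx : y ≤ x := max_le (by linarith) hx1.le
      have habs_s : |s| = x := abs_of_neg (by linarith : s < 0)
      have hhs : h s = x ^ ν - 1 := by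
        rw [hh, habs_s]
        exact max_eq_left (by linarith [Real.one_le_rpow hx1.le hν.le])
      have hht : h t = y ^ ν - 1 := by
        rw [hh, abs_of_nonpos ht0]
        rcases le_total 1 (-t) with h' | h'
        · rw [show y = -t from max_eq_left h']
          exact max_eq_left (by linarith [Real.one_le_rpow h' hν.le])
        · rw [show y = (1:ℝ) from max_eq_right h', Real.one_rpow]
          have : (-t) ^ ν ≤ 1 := Real.rpow_le_one (by linarith) h' hν.le
          rw [max_eq_right (by linarith)]; ring
      rw [hhs, hht]
      have hmvt := rpow_sub_le_mul_aux hν hν1 hy1 hyx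
      have hyt : -t ≤ y := le_max_left _ _
      nlinarith [mul_le_mul_of_nonneg_left (show x - y ≤ t - s by simp only [hx]; linarith) hν.le]
  -- Hölder-type bound
  have key2 : ∀ {s t : ℝ}, s < t → t ≤ 0 → h s - h t ≤ (t - s) ^ ν := by
    intro s t hst ht0
    have hs0 : s ≤ 0 := by linarith
    have habs_s : |s| = -s := abs_of_nonpos hs0
    have habs_t : |t| = -t := abs_of_nonpos ht0
    have hAB : (-t) ^ ν ≤ (-s) ^ ν :=
      Real.rpow_le_rpow (by linarith) (by linarith) hν.le
    have hdiff : h s - h t ≤ (-s) ^ ν - (-t) ^ ν := by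
      rw [hh, hh, habs_s, habs_t]
      rcases le_total ((-s) ^ ν - 1) 0 with hc | hc
      · rw [max_eq_right hc]
        have h2 : (0:ℝ) ≤ max ((-t) ^ ν - 1) 0 := le_max_right _ _
        linarith
      · rw [max_eq_left hc]
        have h2 : (-t) ^ ν - 1 ≤ max ((-t) ^ ν - 1) 0 := le_max_left _ _
        linarith
    have hsub : (-s) ^ ν ≤ (-t) ^ ν + (t - s) ^ ν := by
      have he : -s = (-t) + (t - s) := by ring
      rw [he]; exact rpow_subadd_aux hν.le hν1 (by linarith) (by linarith)
    linarith
  -- monotonicity of h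
  have hmono_h : ∀ {s t : ℝ}, s < t → t ≤ 0 → h t ≤ h s := by
    intro s t hst ht0
    rw [hh, hh, abs_of_nonpos ht0, abs_of_nonpos (by linarith : s ≤ 0)]
    exact max_le_max (sub_le_sub_right
      (Real.rpow_le_rpow (by linarith) (by linarith) hν.le) 1) le_rfl
  refine ⟨α * (ν / (1 - α) + 1 / (α - ν)) + 1, ?_, ?_⟩
  · have hc1 : 0 < ν / (1 - α) := div_pos hν h1α
    have hc2 : 0 < 1 / (α - ν) := by positivity
    nlinarith [mul_pos hα0 (add_pos hc1 hc2)]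
  intro t ht
  set F : ℝ → ℝ := fun s => if s < t - 1 then (t - s) ^ (ν - 1 - α) else ν * (t - s) ^ (-α)
    with hFdef
  set G : ℝ → ℝ := (Ioi (1:ℝ)).indicator (fun u => u ^ (ν - 1 - α)) with hGdef
  have hGon : IntegrableOn (fun u : ℝ => u ^ (ν - 1 - α)) (Ioi (1:ℝ)) :=
    integrableOn_Ioi_rpow_of_lt (by linarith) one_pos
  have hGint : Integrable G := (integrable_indicator_iff measurableSet_Ioi).2 hGon
  have heqG : (Iio (t-1)).indicator (fun s => (t - s) ^ (ν - 1 - α)) = fun s => G (t - s) := by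
    funext s
    by_cases hs : s < t - 1
    · rw [indicator_of_mem (show s ∈ Iio (t-1) from mem_Iio.2 hs), hGdef,
        indicator_of_mem (show t - s ∈ Ioi (1:ℝ) by simp only [mem_Ioi]; linarith)]
    · rw [indicator_of_notMem (show s ∉ Iio (t-1) from fun hm => hs (mem_Iio.1 hm)), hGdef,
        indicator_of_notMem (show t - s ∉ Ioi (1:ℝ) by simp only [mem_Ioi]; push_neg at hs ⊢; linarith)]
  have hGc : Integrable (fun s => G (t - s)) := (integrable_comp_sub_left G t).2 hGint
  have hI1' : IntegrableOn (fun s => (t - s) ^ (ν - 1 - α)) (Iio (t-1)) :=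
    (integrable_indicator_iff measurableSet_Iio).1 (heqG ▸ hGc)
  have hI1 : IntegrableOn F (Iio (t-1)) := by
    apply hI1'.congr_fun ?_ measurableSet_Iio
    intro s hs
    simp only [hFdef, if_pos (mem_Iio.1 hs)]
  have hII : IntervalIntegrable (fun s => ν * (t - s) ^ (-α)) volume (t-1) t := by
    have h0 : IntervalIntegrable (fun u : ℝ => u ^ (-α)) volume 0 1 :=
      intervalIntegral.intervalIntegrable_rpow' (by linarith)
    have h1 := (h0.comp_sub_left t).symm
    have h2 : IntervalIntegrable (fun s => (t - s) ^ (-α)) volume (t - 1) (t - 0) := h1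
    rw [sub_zero] at h2
    exact h2.const_mul ν
  have hI2' : IntegrableOn (fun s => ν * (t - s) ^ (-α)) (Ico (t-1) t) := by
    have := (intervalIntegrable_iff' (by simp)).1 hII
    exact this.mono_set (by rw [uIcc_of_le (by linarith : t - 1 ≤ t)]; exact Ico_subset_Icc_self)
  have hI2 : IntegrableOn F (Ico (t-1) t) := by
    apply hI2'.congr_fun ?_ measurableSet_Ico
    intro s hs
    simp only [hFdef, if_neg (not_lt.2 hs.1)]
  have hsplit : Iio t = Iio (t-1) ∪ Ico (t-1) t := by
    ext x
    simp only [mem_Iio, mem_union, mem_Ico]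
    constructor
    · intro hx
      by_cases h' : x < t - 1
      exacts [Or.inl h', Or.inr ⟨not_lt.1 h', hx⟩]
    · rintro (h' | ⟨_, h'⟩) <;> linarith
  have hFint : IntegrableOn F (Iio t) := by
    rw [hsplit]; exact hI1.union hI2
  have hdisj : Disjoint (Iio (t-1)) (Ico (t-1) t) := by
    rw [disjoint_left]
    intro x hx hx'
    exact absurd hx'.1 (not_le.2 (mem_Iio.1 hx))
  -- compute the integral of F
  have hval1 : ∫ s in Iio (t-1), F s = 1 / (α - ν) := by
    have e1 : ∫ s in Iio (t-1), F s = ∫ s in Iio (t-1), (t - s) ^ (ν - 1 - α) := by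
      apply setIntegral_congr_fun measurableSet_Iio
      intro s hs
      simp only [hFdef, if_pos (mem_Iio.1 hs)]
    rw [e1, ← integral_indicator measurableSet_Iio, heqG,
      integral_sub_left_eq_self G volume t, hGdef, integral_indicator measurableSet_Ioi,
      integral_Ioi_rpow_of_lt (by linarith : ν - 1 - α < -1) one_pos]
    rw [Real.one_rpow]
    have : ν - 1 - α + 1 = -(α - ν) := by ring
    rw [this, neg_div_neg_eq]
  open intervalIntegral in
  have hval2 : ∫ s in Ico (t-1) t, F s = ν * (1 / (1 - α)) := by
    have e1 : ∫ s in Ico (t-1) t, F s = ∫ s in Ico (t-1) t, ν * (t - s) ^ (-α) := by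
      apply setIntegral_congr_fun measurableSet_Ico
      intro s hs
      simp only [hFdef, if_neg (not_lt.2 hs.1)]
    rw [e1, setIntegral_congr_set Ico_ae_eq_Ioc,
      ← intervalIntegral.integral_of_le (by linarith : t - 1 ≤ t)]
    have e2 : (∫ s in (t-1)..t, ν * (t - s) ^ (-α)) = ∫ u in (t-t)..(t-(t-1)), ν * u ^ (-α) :=
      intervalIntegral.integral_comp_sub_left (fun u => ν * u ^ (-α)) t
    rw [e2, show t - t = (0:ℝ) by ring, show t - (t-1) = (1:ℝ) by ring,
      intervalIntegral.integral_const_mul, integral_rpow (Or.inl (by linarith : (-1:ℝ) < -α))]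
    rw [Real.one_rpow, Real.zero_rpow (by linarith : -α + 1 ≠ 0)]
    have : -α + 1 = 1 - α := by ring
    rw [this]
    ring
  have hvalF : ∫ s in Iio t, F s = 1 / (α - ν) + ν * (1 / (1 - α)) := by
    rw [hsplit, setIntegral_union hdisj measurableSet_Ico hI1 hI2, hval1, hval2]
  -- comparison
  have hcomp : ∫ s in Iio t, (h s - h t) * (t - s) ^ (-(1+α)) ≤ ∫ s in Iio t, F s := by
    apply integral_mono_of_nonneg
    · filter_upwards [self_mem_ae_restrict (measurableSet_Iio : MeasurableSet (Iio t))] with s hs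
      have hst : s < t := mem_Iio.1 hs
      exact mul_nonneg (by linarith [hmono_h hst ht])
        (Real.rpow_nonneg (by linarith) _)
    · exact hFint
    · filter_upwards [self_mem_ae_restrict (measurableSet_Iio : MeasurableSet (Iio t))] with s hs
      have hst : s < t := mem_Iio.1 hs
      have hts : (0:ℝ) < t - s := by linarith
      by_cases hc : s < t - 1
      · have hF : F s = (t - s) ^ (ν - 1 - α) := if_pos hc
        rw [hF]
        calc (h s - h t) * (t - s) ^ (-(1+α))
            ≤ (t - s) ^ ν * (t - s) ^ (-(1+α)) :=
              mul_le_mul_of_nonneg_right (key2 hst ht) (Real.rpow_nonneg hts.le _)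
          _ = (t - s) ^ (ν + -(1+α)) := (Real.rpow_add hts _ _).symm
          _ = (t - s) ^ (ν - 1 - α) := by rw [show ν + -(1+α) = ν - 1 - α from by ring]
      · have hF : F s = ν * (t - s) ^ (-α) := if_neg hc
        rw [hF]
        calc (h s - h t) * (t - s) ^ (-(1+α))
            ≤ (ν * (t - s)) * (t - s) ^ (-(1+α)) :=
              mul_le_mul_of_nonneg_right (key1 hst ht) (Real.rpow_nonneg hts.le _)
          _ = ν * ((t - s) ^ (1:ℝ) * (t - s) ^ (-(1+α))) := by rw [Real.rpow_one]; ring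
          _ = ν * (t - s) ^ ((1:ℝ) + -(1+α)) := by rw [← Real.rpow_add hts]
          _ = ν * (t - s) ^ (-α) := by rw [show (1:ℝ) + -(1+α) = -α from by ring]
  have hneg : ∫ s in Iio t, (h t - h s) * (t - s) ^ (-(1+α))
      = -∫ s in Iio t, (h s - h t) * (t - s) ^ (-(1+α)) := by
    rw [← MeasureTheory.integral_neg]
    congr 1
    funext s
    ring
  rw [hneg, mul_neg, neg_le_neg_iff]
  rw [hvalF] at hcomp
  have hfinal := mul_le_mul_of_nonneg_left hcomp hα0.le
  have heq : α * (1 / (α - ν) + ν * (1 / (1 - α))) = α * (ν / (1 - α) + 1 / (α - ν)) := by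
    rw [mul_one_div]; ring
  linarith
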